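/- arXiv:1805.04785 — 7 statements merged into one kernel-verified Lean document; each statement's English description precedes it below -/
import Mathlib

section
/- Let N be a finite set of items with revenues r_i ≥ 0 and utilities v_i ≥ 0, and define the expected revenue of a nonempty assortment S ⊆ N as R(S) = (∑_{i∈S} r_i v_i)/(1 + ∑_{i∈S} v_i). Then the maximum of R over all subsets S of N is attained by a level set: there exists θ ≥ 0 such that R({i ∈ N : r_i ≥ θ}) = max over all subsets S ⊆ N of R(S). -/
open Finset

/-- MNL expected revenue of an assortment `S`. -/
noncomputable def mnlR {N : Type*} (r v : N → ℝ) (S : Finset N) : ℝ :=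
  (∑ i ∈ S, r i * v i) / (1 + ∑ i ∈ S, v i)

/-- The θ-level set: items with revenue at least θ. -/
noncomputable def levelSet {N : Type*} [Fintype N] (r : N → ℝ) (θ : ℝ) : Finset N :=
  Finset.univ.filter (fun i => θ ≤ r i)

/-- The revenue potential function F(θ) = R(L_θ). -/
noncomputable def potF {N : Type*} [Fintype N] (r v : N → ℝ) (θ : ℝ) : ℝ :=
  mnlR r v (levelSet r θ)

/-- The right limit F(θ⁺) = R({i : r_i > θ}). -/
noncomputable def potFplus {N : Type*} [Fintype N] (r v : N → ℝ) (θ : ℝ) : ℝ :=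
  mnlR r v (Finset.univ.filter (fun i => θ < r i))

lemma denom_pos {N : Type*} (v : N → ℝ) (hv : ∀ i, 0 ≤ v i) (S : Finset N) :
    0 < 1 + ∑ i ∈ S, v i := by
  have : 0 ≤ ∑ i ∈ S, v i := Finset.sum_nonneg fun i _ => hv i
  linarith

/-- the maximum of R over all subsets is attained by a level set. -/
theorem stmt0 {N : Type*} [Fintype N] (r v : N → ℝ)
    (hr : ∀ i, 0 ≤ r i) (hv : ∀ i, 0 ≤ v i) :
    ∃ θ : ℝ, 0 ≤ θ ∧ ∀ S : Finset N, mnlR r v S ≤ mnlR r v (levelSet r θ) := by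
  classical
  obtain ⟨S₀, -, hS₀⟩ := Finset.exists_max_image (Finset.univ : Finset (Finset N))
    (mnlR r v) ⟨∅, Finset.mem_univ ∅⟩
  set M := mnlR r v S₀ with hM
  have hmax : ∀ S : Finset N, mnlR r v S ≤ M := fun S => hS₀ S (Finset.mem_univ S)
  have hM0 : 0 ≤ M := by
    have := hmax ∅
    simpa [mnlR] using hmax ∅ |>.trans_eq' (by simp [mnlR])
  refine ⟨M, hM0, fun S => (hmax S).trans ?_⟩
  set L := levelSet r M with hL
  -- key sum identity for S₀
  have hd₀ := denom_pos v hv S₀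
  have hkey : ∑ i ∈ S₀, (r i - M) * v i = M := by
    have h1 : ∑ i ∈ S₀, r i * v i = M * (1 + ∑ i ∈ S₀, v i) := by
      rw [hM, mnlR] at *
      field_simp
    have h2 : ∑ i ∈ S₀, (r i - M) * v i
        = ∑ i ∈ S₀, r i * v i - M * ∑ i ∈ S₀, v i := by
      simp [sub_mul, Finset.sum_sub_distrib, Finset.mul_sum]
    rw [h2, h1]; ring
  -- ∑ over S₀ ∩ L ≥ M
  have hsplit : ∑ i ∈ S₀, (r i - M) * v i
      = ∑ i ∈ S₀ ∩ L, (r i - M) * v i + ∑ i ∈ S₀ \ L, (r i - M) * v i := by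
    rw [← Finset.sum_inter_add_sum_sdiff]
  have hneg : ∑ i ∈ S₀ \ L, (r i - M) * v i ≤ 0 := by
    apply Finset.sum_nonpos
    intro i hi
    have hiL : i ∉ L := (Finset.mem_sdiff.mp hi).2
    have : r i < M := by
      by_contra h
      exact hiL (by simp [hL, levelSet, not_lt.mp h])
    have := hv i
    nlinarith
  have h1 : M ≤ ∑ i ∈ S₀ ∩ L, (r i - M) * v i := by
    rw [hsplit] at hkey; linarith
  have h2 : ∑ i ∈ S₀ ∩ L, (r i - M) * v i ≤ ∑ i ∈ L, (r i - M) * v i := by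
    apply Finset.sum_le_sum_of_subset_of_nonneg (Finset.inter_subset_right)
    intro i hi _
    have : M ≤ r i := by simpa [hL, levelSet] using hi
    have := hv i
    nlinarith
  have hML : M ≤ ∑ i ∈ L, (r i - M) * v i := h1.trans h2
  have hdL := denom_pos v hv L
  rw [mnlR, le_div_iff₀ hdL]
  have heq : ∑ i ∈ L, (r i - M) * v i = ∑ i ∈ L, r i * v i - M * ∑ i ∈ L, v i := by
    simp [sub_mul, Finset.sum_sub_distrib, Finset.mul_sum]
  rw [heq] at hML
  linarith
end

section
/- Define the potential function F(θ) = R(L_θ) where L_θ = {i ∈ N : r_i ≥ θ} and R(S) = (∑_{i∈S} r_i v_i)/(1 + ∑_{i∈S} v_i). Let F* = sup_{θ≥0} F(θ). Then there exists θ* > 0 such that θ* = F(θ*) = F*, provided F* > 0 (i.e., some item has r_i v_i > 0). -/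
open Finset

/-- there is θ* > 0 with θ* = F(θ*) = F* = sup_{θ ≥ 0} F(θ). -/
theorem stmt1 {N : Type*} [Fintype N] (r v : N → ℝ)
    (hr : ∀ i, 0 ≤ r i ∧ r i ≤ 1) (hv : ∀ i, 0 ≤ v i)
    (hpos : ∃ i, 0 < r i * v i) :
    ∃ θstar : ℝ, 0 < θstar ∧ potF r v θstar = θstar ∧
      ∀ θ : ℝ, 0 ≤ θ → potF r v θ ≤ potF r v θstar := by
  classical
  obtain ⟨i₀, hi₀⟩ := hpos
  have hden : ∀ S : Finset N, (0:ℝ) < 1 + ∑ i ∈ S, v i := by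
    intro S
    have h := Finset.sum_nonneg (fun i (_ : i ∈ S) => hv i)
    linarith
  -- F(0) > 0
  have hL0 : levelSet r 0 = Finset.univ := by
    ext i; simp [levelSet, (hr i).1]
  have hF0 : 0 < potF r v 0 := by
    rw [potF, hL0, mnlR]
    refine div_pos ?_ (hden _)
    exact Finset.sum_pos' (fun i _ => mul_nonneg (hr i).1 (hv i))
      ⟨i₀, Finset.mem_univ _, hi₀⟩
  -- finite image, so a maximum value ρ exists
  have hfinS : ((potF r v) '' Set.Ici 0).Finite := by
    apply Set.Finite.subset (Set.finite_range (fun S : Finset N => mnlR r v S))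
    rintro x ⟨θ, -, rfl⟩
    exact ⟨levelSet r θ, rfl⟩
  have hne : ((potF r v) '' Set.Ici 0).Nonempty := ⟨_, ⟨0, Set.mem_Ici.mpr le_rfl, rfl⟩⟩
  obtain ⟨ρ, hρmem, hmax'⟩ := hfinS.exists_maximalFor id _ hne
  have hmax : ∀ θ, 0 ≤ θ → potF r v θ ≤ ρ := by
    intro θ hθ
    by_contra h
    push_neg at h
    have := hmax' ⟨θ, hθ, rfl⟩ h.le
    simp only [id] at this
    exact absurd this (not_le.mpr h)
  have hρpos : 0 < ρ := lt_of_lt_of_le hF0 (hmax 0 le_rfl)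
  obtain ⟨θ₀, hθ₀, hFθ₀⟩ := hρmem
  set S₀ := levelSet r θ₀ with hS₀
  -- rewrite sums of (r i - ρ) * v i
  have hsplit : ∀ S : Finset N, ∑ i ∈ S, (r i - ρ) * v i
      = (∑ i ∈ S, r i * v i) - ρ * ∑ i ∈ S, v i := by
    intro S
    rw [Finset.mul_sum, ← Finset.sum_sub_distrib]
    exact Finset.sum_congr rfl fun i _ => by ring
  have hg : ∑ i ∈ S₀, (r i - ρ) * v i = ρ := by
    have h1 : ∑ i ∈ S₀, r i * v i = ρ * (1 + ∑ i ∈ S₀, v i) :=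
      (div_eq_iff (hden S₀).ne').mp hFθ₀
    rw [hsplit]
    linarith [h1]
  -- level set at ρ maximizes the surplus
  have hkey : ∑ i ∈ S₀, (r i - ρ) * v i ≤ ∑ i ∈ levelSet r ρ, (r i - ρ) * v i := by
    have h1 : ∑ i ∈ S₀, (r i - ρ) * v i
        ≤ ∑ i ∈ S₀.filter (fun i => ρ ≤ r i), (r i - ρ) * v i := by
      rw [← Finset.sum_filter_add_sum_filter_not S₀ (fun i => ρ ≤ r i)]
      have h2 : ∑ i ∈ S₀.filter (fun i => ¬ ρ ≤ r i), (r i - ρ) * v i ≤ 0 := by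
        refine Finset.sum_nonpos fun i hi => ?_
        have h3 := (Finset.mem_filter.mp hi).2
        push_neg at h3
        have : r i - ρ ≤ 0 := by linarith
        nlinarith [hv i]
      linarith
    refine h1.trans (Finset.sum_le_sum_of_subset_of_nonneg ?_ ?_)
    · intro i hi
      simp only [levelSet, Finset.mem_filter, Finset.mem_univ, true_and]
      exact (Finset.mem_filter.mp hi).2
    · intro i hi _
      have h4 : ρ ≤ r i := by
        simpa [levelSet] using hi
      exact mul_nonneg (by linarith) (hv i)
  -- hence F(ρ) ≥ ρ
  have hge : ρ ≤ potF r v ρ := by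
    rw [potF, mnlR, le_div_iff₀ (hden _)]
    have := hkey
    rw [hg, hsplit] at this
    linarith
  have hfix : potF r v ρ = ρ := le_antisymm (hmax ρ hρpos.le) hge
  exact ⟨ρ, hρpos, hfix, fun θ hθ => by rw [hfix]; exact hmax θ hθ⟩
end

section
/- With F as the MNL potential function and θ* satisfying θ* = F(θ*) = sup_θ F(θ), for every θ with 0 ≤ θ ≤ θ* one has F(θ) ≥ θ. -/
open Finset

/-- for every 0 ≤ θ ≤ θ*, F(θ) ≥ θ. -/
theorem stmt3 {N : Type*} [Fintype N] (r v : N → ℝ)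
    (hr : ∀ i, 0 ≤ r i ∧ r i ≤ 1) (hv : ∀ i, 0 ≤ v i)
    (θstar : ℝ) (hθpos : 0 ≤ θstar) (hfix : potF r v θstar = θstar)
    (hmax : ∀ θ : ℝ, 0 ≤ θ → potF r v θ ≤ potF r v θstar) :
    ∀ θ : ℝ, 0 ≤ θ → θ ≤ θstar → θ ≤ potF r v θ := by
  intro θ hθ0 hθle
  have hden : ∀ S : Finset N, (0:ℝ) < 1 + ∑ i ∈ S, v i := by
    intro S
    have : 0 ≤ ∑ i ∈ S, v i := Finset.sum_nonneg fun i _ => hv i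
    linarith
  set S := levelSet r θ with hS
  set T := levelSet r θstar with hT
  have hsub : T ⊆ S := by
    intro i hi
    simp only [hS, hT, levelSet, Finset.mem_filter] at *
    exact ⟨hi.1, le_trans hθle hi.2⟩
  have hfix' : ∑ i ∈ T, r i * v i = θstar * (1 + ∑ i ∈ T, v i) := by
    have h := hfix
    rw [potF, mnlR, div_eq_iff (ne_of_gt (hden T))] at h
    linarith [h]
  have h1 : ∑ i ∈ T, (r i - θ) * v i ≤ ∑ i ∈ S, (r i - θ) * v i := by
    apply Finset.sum_le_sum_of_subset_of_nonneg hsub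
    intro i hi _
    have : θ ≤ r i := (Finset.mem_filter.mp hi).2
    exact mul_nonneg (by linarith) (hv i)
  have h2 : ∑ i ∈ T, (r i - θstar) * v i ≤ ∑ i ∈ T, (r i - θ) * v i :=
    Finset.sum_le_sum fun i _ => mul_le_mul_of_nonneg_right (by linarith) (hv i)
  have h3 : ∑ i ∈ T, (r i - θstar) * v i = θstar := by
    simp only [sub_mul, Finset.sum_sub_distrib, hfix', ← Finset.mul_sum]
    ring
  have h4 : ∑ i ∈ S, (r i - θ) * v i = ∑ i ∈ S, r i * v i - θ * ∑ i ∈ S, v i := by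
    simp only [sub_mul, Finset.sum_sub_distrib, ← Finset.mul_sum]
  have key : θ * (1 + ∑ i ∈ S, v i) ≤ ∑ i ∈ S, r i * v i := by
    have : θstar ≤ ∑ i ∈ S, r i * v i - θ * ∑ i ∈ S, v i := by
      rw [← h4]; linarith
    linarith
  rw [potF, mnlR, le_div_iff₀ (hden S)]
  linarith [key]
end

section
/- Let F(θ) = R({i : r_i ≥ θ}) and F(θ⁺) = R({i : r_i > θ}) for the MNL expected revenue R. Then for any θ ≥ 0, F(θ) − F(θ⁺) = γ_θ · (θ − F(θ⁺)), where γ_θ = (∑_{r_i = θ} v_i)/(1 + ∑_{r_i ≥ θ} v_i). In particular, F(θ) − θ = (1 − γ_θ)(F(θ⁺) − θ). -/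
open Finset

/-- F(θ) − F(θ⁺) = γ_θ (θ − F(θ⁺)) and F(θ) − θ = (1 − γ_θ)(F(θ⁺) − θ). -/
theorem stmt4 {N : Type*} [Fintype N] (r v : N → ℝ)
    (hv : ∀ i, 0 ≤ v i) (θ : ℝ) (hθ : 0 ≤ θ) :
    potF r v θ - potFplus r v θ =
      ((∑ i ∈ Finset.univ.filter (fun i => r i = θ), v i) /
        (1 + ∑ i ∈ levelSet r θ, v i)) * (θ - potFplus r v θ) ∧
    potF r v θ - θ =
      (1 - (∑ i ∈ Finset.univ.filter (fun i => r i = θ), v i) /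
        (1 + ∑ i ∈ levelSet r θ, v i)) * (potFplus r v θ - θ) := by
  classical
  have hsplit : ∀ f : N → ℝ, ∑ i ∈ levelSet r θ, f i =
      (∑ i ∈ Finset.univ.filter (fun i => θ < r i), f i) +
      (∑ i ∈ Finset.univ.filter (fun i => r i = θ), f i) := by
    intro f
    have hdisj : Disjoint (Finset.univ.filter (fun i : N => θ < r i))
        (Finset.univ.filter (fun i : N => r i = θ)) := by
      simp only [Finset.disjoint_filter, Finset.mem_filter]
      intro i _ h1 h2
      exact absurd h2 (ne_of_gt h1)
    have hunion : levelSet r θ =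
        (Finset.univ.filter (fun i : N => θ < r i)) ∪
        (Finset.univ.filter (fun i : N => r i = θ)) := by
      ext i
      simp only [levelSet, Finset.mem_filter, Finset.mem_union, Finset.mem_univ, true_and]
      constructor
      · intro h
        rcases lt_or_eq_of_le h with h' | h'
        · exact Or.inl h'
        · exact Or.inr h'.symm
      · rintro (h | h)
        · exact le_of_lt h
        · exact h.ge
    rw [hunion, Finset.sum_union hdisj]
  set A := ∑ i ∈ Finset.univ.filter (fun i : N => θ < r i), r i * v i with hA
  set B := ∑ i ∈ Finset.univ.filter (fun i : N => θ < r i), v i with hB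
  set E := ∑ i ∈ Finset.univ.filter (fun i : N => r i = θ), v i with hE
  have hEeq : ∑ i ∈ Finset.univ.filter (fun i : N => r i = θ), r i * v i = θ * E := by
    rw [hE, Finset.mul_sum]
    apply Finset.sum_congr rfl
    intro i hi
    rw [Finset.mem_filter] at hi
    rw [hi.2]
  have hBpos : 0 < 1 + B := by
    have : 0 ≤ B := Finset.sum_nonneg fun i _ => hv i
    linarith
  have hEnn : 0 ≤ E := Finset.sum_nonneg fun i _ => hv i
  have hLv : ∑ i ∈ levelSet r θ, v i = B + E := hsplit v
  have hLrv : ∑ i ∈ levelSet r θ, r i * v i = A + θ * E := by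
    rw [hsplit (fun i => r i * v i), hEeq]
  have hLpos : (0:ℝ) < 1 + (B + E) := by linarith
  have hF : potF r v θ = (A + θ * E) / (1 + (B + E)) := by
    rw [potF, mnlR, hLv, hLrv]
  have hFp : potFplus r v θ = A / (1 + B) := rfl
  rw [hF, hFp, hLv]
  constructor <;> · field_simp; ring
end

section
/- Let S' ⊆ S be finite sets of items, and suppose R(S') = F* where F* is a real number with ∑_{i∈S'}(r_i − F*)v_i = F*. If F* ≤ min_{i ∈ S \ S'} r_i, then R(S) ≥ F*, where R(S) = (∑_{i∈S} r_i v_i)/(1 + ∑_{i∈S} v_i). In words: enlarging an assortment by items whose revenues are all at least the current expected revenue does not decrease the expected revenue. -/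
open Finset

/-- enlarging an assortment by items with revenues at least the
current expected revenue does not decrease the expected revenue. -/
theorem stmt6 {N : Type*} [DecidableEq N] (r v : N → ℝ)
    (hr : ∀ i, 0 ≤ r i) (hv : ∀ i, 0 ≤ v i)
    (S' S : Finset N) (hsub : S' ⊆ S) (Fstar : ℝ)
    (hR : mnlR r v S' = Fstar)
    (hsum : ∑ i ∈ S', (r i - Fstar) * v i = Fstar)
    (hmin : ∀ i ∈ S \ S', Fstar ≤ r i) :
    Fstar ≤ mnlR r v S := by
  have hpos : (0:ℝ) < 1 + ∑ i ∈ S, v i := by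
    have : (0:ℝ) ≤ ∑ i ∈ S, v i := Finset.sum_nonneg fun i _ => hv i
    linarith
  have key : Fstar ≤ ∑ i ∈ S, (r i - Fstar) * v i := by
    rw [← Finset.sum_sdiff hsub, hsum]
    have h0 : 0 ≤ ∑ i ∈ S \ S', (r i - Fstar) * v i :=
      Finset.sum_nonneg fun i hi => mul_nonneg (by linarith [hmin i hi]) (hv i)
    linarith
  rw [mnlR, le_div_iff₀ hpos]
  have expand : ∑ i ∈ S, (r i - Fstar) * v i
      = (∑ i ∈ S, r i * v i) - Fstar * ∑ i ∈ S, v i := by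
    rw [Finset.mul_sum, ← Finset.sum_sub_distrib]
    exact Finset.sum_congr rfl fun i _ => by ring
  rw [expand] at key
  linarith
end

section
/- Let X_1, …, X_L be i.i.d. real random variables with mean μ and a ≤ X_i ≤ b almost surely. For any δ ∈ (0,1], with probability at least 1 − Lδ, simultaneously for all ℓ ∈ {1,…,L}: |(1/ℓ)∑_{i=1}^ℓ X_i − μ| ≤ √(2(b−a)² ln(8/(δℓ)) / ℓ). -/
open MeasureTheory ProbabilityTheory


open Real

section scalar
variable {p : ℝ}

private noncomputable def hfF (p t : ℝ) : ℝ := p * exp ((1-p)*t) + (1-p) * exp (-(p*t))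
private noncomputable def hfF' (p t : ℝ) : ℝ := p*(1-p) * (exp ((1-p)*t) - exp (-(p*t)))
private noncomputable def hfF'' (p t : ℝ) : ℝ :=
  p*(1-p) * ((1-p) * exp ((1-p)*t) + p * exp (-(p*t)))

private lemma hfF_pos (hp0 : 0 ≤ p) (hp1 : p ≤ 1) (t : ℝ) : 0 < hfF p t := by
  rcases eq_or_lt_of_le hp0 with h|h
  · subst h; simp only [hfF]; norm_num
  rcases eq_or_lt_of_le hp1 with h1|h1
  · subst h1; simp only [hfF]; norm_num
  · have : 0 < 1 - p := by linarith
    unfold hfF; positivity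

private lemma hasDerivAt_exp1 (t : ℝ) :
    HasDerivAt (fun t => exp ((1-p)*t)) ((1-p) * exp ((1-p)*t)) t := by
  simpa [mul_comm] using (HasDerivAt.exp ((hasDerivAt_id t).const_mul (1-p)))

private lemma hasDerivAt_exp2 (t : ℝ) :
    HasDerivAt (fun t => exp (-(p*t))) (-p * exp (-(p*t))) t := by
  simpa [mul_comm] using (HasDerivAt.exp (((hasDerivAt_id t).const_mul p).neg))

private lemma hasDerivAt_hfF (t : ℝ) : HasDerivAt (hfF p) (hfF' p t) t := by
  have := ((hasDerivAt_exp1 (p := p) t).const_mul p).add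
    ((hasDerivAt_exp2 (p := p) t).const_mul (1-p))
  refine this.congr_deriv ?_
  simp only [hfF']; ring

private lemma hasDerivAt_hfF' (t : ℝ) : HasDerivAt (hfF' p) (hfF'' p t) t := by
  have := ((hasDerivAt_exp1 (p := p) t).sub (hasDerivAt_exp2 (p := p) t)).const_mul (p*(1-p))
  refine this.congr_deriv ?_
  simp only [hfF'']; ring

private lemma key_ineq (hp0 : 0 ≤ p) (hp1 : p ≤ 1) (t : ℝ) :
    hfF'' p t * hfF p t - hfF' p t ^ 2 ≤ (hfF p t)^2 / 4 := by
  have hu0 : 0 < exp ((1-p)*t) := exp_pos _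
  have hv0 : 0 < exp (-(p*t)) := exp_pos _
  simp only [hfF, hfF', hfF'']
  nlinarith [sq_nonneg (p * exp ((1-p)*t) - (1-p) * exp (-(p*t))),
    mul_pos hu0 hv0, sq_nonneg (p*(1-p)), mul_nonneg hp0 (by linarith : (0:ℝ) ≤ 1-p),
    mul_pos (mul_pos hu0 hv0) (mul_pos hu0 hv0)]

private noncomputable def hfD (p t : ℝ) : ℝ := t^2/8 - log (hfF p t)
private noncomputable def hfD' (p t : ℝ) : ℝ := t/4 - hfF' p t / hfF p t

private lemma hasDerivAt_hfD (hp0 : 0 ≤ p) (hp1 : p ≤ 1) (t : ℝ) :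
    HasDerivAt (hfD p) (hfD' p t) t := by
  have h1 : HasDerivAt (fun t : ℝ => t^2/8) (t/4) t := by
    have := ((hasDerivAt_pow 2 t).div_const 8)
    refine this.congr_deriv ?_
    norm_num; ring
  have h2 : HasDerivAt (fun t => log (hfF p t)) (hfF' p t / hfF p t) t :=
    (hasDerivAt_hfF t).log (hfF_pos hp0 hp1 t).ne'
  exact h1.sub h2

private lemma hasDerivAt_hfD' (hp0 : 0 ≤ p) (hp1 : p ≤ 1) (t : ℝ) :
    HasDerivAt (hfD' p)
      (1/4 - (hfF'' p t * hfF p t - hfF' p t ^ 2) / (hfF p t)^2) t := by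
  have h2 : HasDerivAt (fun t => hfF' p t / hfF p t)
      ((hfF'' p t * hfF p t - hfF' p t * hfF' p t) / (hfF p t)^2) t :=
    (hasDerivAt_hfF' t).div (hasDerivAt_hfF t) (hfF_pos hp0 hp1 t).ne'
  have h1 : HasDerivAt (fun t : ℝ => t/4) (1/4) t := (hasDerivAt_id t).div_const 4
  have := h1.sub h2
  refine this.congr_deriv ?_
  ring

private lemma hfD'_mono (hp0 : 0 ≤ p) (hp1 : p ≤ 1) : Monotone (hfD' p) := by
  apply monotone_of_deriv_nonneg
  · exact fun t => (hasDerivAt_hfD' hp0 hp1 t).differentiableAt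
  · intro t
    rw [(hasDerivAt_hfD' hp0 hp1 t).deriv]
    have h := key_ineq hp0 hp1 t
    have hF : 0 < (hfF p t)^2 := pow_pos (hfF_pos hp0 hp1 t) 2
    rw [sub_nonneg, div_le_iff₀ hF]
    linarith

private lemma hfD'_zero : hfD' p 0 = 0 := by
  simp [hfD', hfF']

private lemma hfD_nonneg (hp0 : 0 ≤ p) (hp1 : p ≤ 1) (t : ℝ) : 0 ≤ hfD p t := by
  have hD0 : hfD p 0 = 0 := by simp [hfD, hfF]
  have hdiff : Differentiable ℝ (hfD p) := fun t => (hasDerivAt_hfD hp0 hp1 t).differentiableAt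
  have hcont : Continuous (hfD p) := hdiff.continuous
  rcases le_or_gt 0 t with ht|ht
  · have hm : MonotoneOn (hfD p) (Set.Ici 0) := by
      apply monotoneOn_of_deriv_nonneg (convex_Ici 0) (hcont.continuousOn)
      · intro x _; exact (hasDerivAt_hfD hp0 hp1 x).differentiableAt.differentiableWithinAt
      · intro x hx
        rw [(hasDerivAt_hfD hp0 hp1 x).deriv, ← hfD'_zero (p := p)]
        exact hfD'_mono hp0 hp1 (le_of_lt (by simpa using hx))
    have := hm (Set.self_mem_Ici) (Set.mem_Ici.2 ht) ht
    linarith [hD0 ▸ this]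
  · have hm : AntitoneOn (hfD p) (Set.Iic 0) := by
      apply antitoneOn_of_deriv_nonpos (convex_Iic 0) (hcont.continuousOn)
      · intro x _; exact (hasDerivAt_hfD hp0 hp1 x).differentiableAt.differentiableWithinAt
      · intro x hx
        rw [(hasDerivAt_hfD hp0 hp1 x).deriv, ← hfD'_zero (p := p)]
        exact hfD'_mono hp0 hp1 (le_of_lt (by simpa using hx))
    have := hm (Set.mem_Iic.2 ht.le) (Set.self_mem_Iic) ht.le
    linarith [hD0 ▸ this]

/-- **Hoeffding's scalar lemma** -/
lemma hoeffding_scalar (hp0 : 0 ≤ p) (hp1 : p ≤ 1) (t : ℝ) :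
    p * exp ((1-p)*t) + (1-p) * exp (-(p*t)) ≤ exp (t^2/8) := by
  have h := hfD_nonneg hp0 hp1 t
  have hF := hfF_pos hp0 hp1 t
  have hlog : log (hfF p t) ≤ t^2/8 := by simp only [hfD] at h; linarith
  calc p * exp ((1-p)*t) + (1-p) * exp (-(p*t)) = hfF p t := rfl
    _ = exp (log (hfF p t)) := (exp_log hF).symm
    _ ≤ exp (t^2/8) := exp_le_exp.2 hlog

end scalar

section mgfbound
open Real MeasureTheory

variable {Ω : Type*} [MeasurableSpace Ω] {P : Measure Ω} [IsProbabilityMeasure P]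

lemma integrable_of_bounded_ae {Y : Ω → ℝ} (hY : Measurable Y) {C : ℝ}
    (h : ∀ᵐ ω ∂P, |Y ω| ≤ C) : Integrable Y P := by
  refine (integrable_const C).mono' hY.aestronglyMeasurable ?_
  filter_upwards [h] with ω hω
  simpa using hω

lemma integrable_exp_of_mem_Icc {Y : Ω → ℝ} (hY : Measurable Y) {A B s : ℝ}
    (hb : ∀ᵐ ω ∂P, Y ω ∈ Set.Icc A B) :
    Integrable (fun ω => exp (s * Y ω)) P := by
  refine integrable_of_bounded_ae ((hY.const_mul s).exp) (C := exp (|s| * (|A| + |B|))) ?_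
  filter_upwards [hb] with ω hω
  rw [abs_of_pos (exp_pos _)]
  apply exp_le_exp.2
  rcases le_or_gt 0 s with hs|hs
  · calc s * Y ω ≤ s * B := by nlinarith [hω.2]
      _ ≤ |s| * (|A| + |B|) := by
        have : s * B ≤ |s| * |B| := by
          calc s * B ≤ |s * B| := le_abs_self _
            _ = |s| * |B| := abs_mul _ _
        nlinarith [abs_nonneg A, abs_nonneg s]
  · calc s * Y ω ≤ s * A := by nlinarith [hω.1]
      _ ≤ |s| * (|A| + |B|) := by
        have : s * A ≤ |s * A| := le_abs_self _
        rw [abs_mul] at this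
        nlinarith [abs_nonneg B, abs_nonneg s]

/-- **Hoeffding's lemma**. -/
lemma hoeffding_mgf {Y : Ω → ℝ} (hY : Measurable Y) {A B : ℝ} (s : ℝ)
    (hb : ∀ᵐ ω ∂P, Y ω ∈ Set.Icc A B) (hmean : ∫ ω, Y ω ∂P = 0) :
    ∫ ω, exp (s * Y ω) ∂P ≤ exp (s^2 * (B-A)^2/8) := by
  have hYint : Integrable Y P := by
    refine integrable_of_bounded_ae hY (C := |A| + |B|) ?_
    filter_upwards [hb] with ω hω
    have := abs_le_max_abs_abs hω.1 hω.2
    have : |Y ω| ≤ max |A| |B| := this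
    have h2 : max |A| |B| ≤ |A| + |B| := max_le (le_add_of_nonneg_right (abs_nonneg B)) (le_add_of_nonneg_left (abs_nonneg A))
    linarith
  have hA0 : A ≤ 0 := by
    have h1 : ∫ _ω, A ∂P ≤ ∫ ω, Y ω ∂P :=
      integral_mono_ae (integrable_const A) hYint (hb.mono fun ω h => h.1)
    simpa [hmean] using h1
  have hB0 : 0 ≤ B := by
    have h1 : ∫ ω, Y ω ∂P ≤ ∫ _ω, B ∂P :=
      integral_mono_ae hYint (integrable_const B) (hb.mono fun ω h => h.2)
    simpa [hmean] using h1
  rcases eq_or_lt_of_le (hA0.trans hB0) with hAB|hAB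
  · -- A = B, hence A = B = 0 and Y = 0 a.e.
    have hA : A = 0 := le_antisymm hA0 (by rw [hAB]; exact hB0)
    have hB : B = 0 := hAB ▸ hA
    have hY0 : ∀ᵐ ω ∂P, Y ω = 0 := by
      filter_upwards [hb] with ω hω
      rw [hA, hB] at hω
      exact le_antisymm hω.2 hω.1
    have hval : ∫ ω, exp (s * Y ω) ∂P = 1 := by
      rw [integral_congr_ae (g := fun _ => (1:ℝ))
        (by filter_upwards [hY0] with ω h; rw [h]; simp)]
      simp
    rw [hval]
    exact Real.one_le_exp (by positivity)
  · -- main case A < B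
    set c := B - A with hc
    have hc0 : 0 < c := by simp [hc]; linarith
    set p := -A / c with hp
    have hp0 : 0 ≤ p := by
      apply div_nonneg (by linarith) hc0.le
    have hp1 : p ≤ 1 := by
      rw [hp, div_le_one hc0]; linarith
    set t := s * c with ht
    have hpt : -(p*t) = s*A := by
      rw [hp, ht]; field_simp
    have h1pt : (1-p)*t = s*B := by
      have : (1:ℝ) - p = B / c := by rw [hp]; field_simp; rw [hc]; ring
      rw [this, ht, hc]; field_simp
    -- pointwise convexity bound
    have hconv : ∀ᵐ ω ∂P, exp (s * Y ω) ≤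
        (B - Y ω)/c * exp (s*A) + (Y ω - A)/c * exp (s*B) := by
      filter_upwards [hb] with ω hω
      have hw1 : (0:ℝ) ≤ (B - Y ω)/c := div_nonneg (by linarith [hω.2]) hc0.le
      have hw2 : (0:ℝ) ≤ (Y ω - A)/c := div_nonneg (by linarith [hω.1]) hc0.le
      have hsum : (B - Y ω)/c + (Y ω - A)/c = 1 := by field_simp [hc]; rw [hc]; ring
      have := convexOn_exp.2 (Set.mem_univ (s*A)) (Set.mem_univ (s*B)) hw1 hw2 hsum
      simp only [smul_eq_mul] at this
      have harg : (B - Y ω)/c * (s*A) + (Y ω - A)/c * (s*B) = s * Y ω := by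
        field_simp [hc]
        ring
      rwa [harg] at this
    -- integrate
    have hexp_int : Integrable (fun ω => exp (s * Y ω)) P := integrable_exp_of_mem_Icc hY hb
    have hrhs_eq : (fun ω => (B - Y ω)/c * exp (s*A) + (Y ω - A)/c * exp (s*B)) =
        fun ω => (B/c * exp (s*A) - A/c * exp (s*B)) +
          ((exp (s*B) - exp (s*A))/c) * Y ω := by
      funext ω; field_simp; ring
    have hrhs_int : Integrable
        (fun ω => (B/c * exp (s*A) - A/c * exp (s*B)) +
          ((exp (s*B) - exp (s*A))/c) * Y ω) P :=
      (integrable_const _).add (hYint.const_mul _)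
    have hint : ∫ ω, exp (s * Y ω) ∂P ≤
        ∫ ω, ((B/c * exp (s*A) - A/c * exp (s*B)) +
          ((exp (s*B) - exp (s*A))/c) * Y ω) ∂P := by
      refine integral_mono_ae hexp_int hrhs_int ?_
      filter_upwards [hconv] with ω hω
      calc exp (s * Y ω) ≤ (B - Y ω)/c * exp (s*A) + (Y ω - A)/c * exp (s*B) := hω
        _ = _ := by field_simp; ring
    have hval : ∫ ω, ((B/c * exp (s*A) - A/c * exp (s*B)) +
          ((exp (s*B) - exp (s*A))/c) * Y ω) ∂P =
        B/c * exp (s*A) - A/c * exp (s*B) := by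
      rw [integral_add (integrable_const _) (hYint.const_mul _), integral_const,
        integral_const_mul, hmean]
      simp
    rw [hval] at hint
    -- apply scalar lemma
    have hscal := hoeffding_scalar hp0 hp1 t
    have hfinal : B/c * exp (s*A) - A/c * exp (s*B) =
        p * exp ((1-p)*t) + (1-p) * exp (-(p*t)) := by
      rw [hpt, h1pt]
      have h1 : (1:ℝ) - p = B / c := by rw [hp]; field_simp; rw [hc]; ring
      rw [h1, hp]
      ring
    have ht2 : t^2/8 = s^2*(B-A)^2/8 := by rw [ht, hc]; ring
    calc ∫ ω, exp (s * Y ω) ∂P ≤ B/c * exp (s*A) - A/c * exp (s*B) := hint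
      _ = p * exp ((1-p)*t) + (1-p) * exp (-(p*t)) := hfinal
      _ ≤ exp (t^2/8) := hscal
      _ = exp (s^2*(B-A)^2/8) := by rw [ht2]

end mgfbound

section maximal
open Real MeasureTheory ProbabilityTheory

variable {Ω : Type*} [MeasurableSpace Ω] {P : Measure Ω} [IsProbabilityMeasure P]

lemma indep_blocks (Y : ℕ → Ω → ℝ) (hmeas : ∀ i, Measurable (Y i))
    (hindep : iIndepFun Y P) (n N : ℕ)
    (F : ({i // i ∈ Finset.range n} → ℝ) → ℝ) (G : ({i // i ∈ Finset.Ico n N} → ℝ) → ℝ)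
    (hF : Measurable F) (hG : Measurable G) :
    IndepFun (fun ω => F (fun i => Y i ω)) (fun ω => G (fun i => Y i ω)) P := by
  have hd : Disjoint (Finset.range n) (Finset.Ico n N) := by
    rw [Finset.disjoint_left]
    intro x hx hx2
    simp only [Finset.mem_range] at hx
    simp only [Finset.mem_Ico] at hx2
    omega
  have h := hindep.indepFun_finset (Finset.range n) (Finset.Ico n N) hd hmeas
  exact h.comp hF hG

/-- Maximal Hoeffding-type inequality via first-passage decomposition. -/
lemma maximal_hoeffding (Y : ℕ → Ω → ℝ) (hmeas : ∀ i, Measurable (Y i))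
    (hindep : iIndepFun Y P)
    {A B : ℝ} (hmean : ∀ i, ∫ ω, Y i ω ∂P = 0)
    (hb : ∀ i, ∀ᵐ ω ∂P, Y i ω ∈ Set.Icc A B)
    (N : ℕ) (lam s : ℝ) (hs : 0 < s) :
    (P {ω | ∃ n ∈ Finset.Icc 1 N, lam ≤ ∑ i ∈ Finset.range n, Y i ω}).toReal ≤
      exp (- (s * lam) + N * (s^2 * (B-A)^2/8)) := by
  classical
  set T : ℕ → Ω → ℝ := fun n ω => ∑ i ∈ Finset.range n, Y i ω with hT
  have hTmeas : ∀ n, Measurable (T n) := fun n => Finset.measurable_sum _ fun i _ => hmeas i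
  have hall : ∀ᵐ ω ∂P, ∀ i, Y i ω ∈ Set.Icc A B := by
    rw [MeasureTheory.ae_all_iff]; exact hb
  have hTIcc : ∀ n : ℕ, ∀ᵐ ω ∂P, T n ω ∈ Set.Icc ((n:ℝ)*A) ((n:ℝ)*B) := by
    intro n
    filter_upwards [hall] with ω hω
    have e1 : ∑ _i ∈ Finset.range n, A = (n:ℝ)*A := by simp [mul_comm]
    have e2 : ∑ _i ∈ Finset.range n, B = (n:ℝ)*B := by simp [mul_comm]
    exact ⟨e1 ▸ Finset.sum_le_sum fun i _ => (hω i).1,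
      e2 ▸ Finset.sum_le_sum fun i _ => (hω i).2⟩
  have hTint : ∀ n, Integrable (fun ω => exp (s * T n ω)) P :=
    fun n => integrable_exp_of_mem_Icc (hTmeas n) (hTIcc n)
  have hYint : ∀ i, Integrable (Y i) P := by
    intro i
    refine integrable_of_bounded_ae (hmeas i) (C := |A| + |B|) ?_
    filter_upwards [hb i] with ω hω
    have h1 : |Y i ω| ≤ max |A| |B| := abs_le_max_abs_abs hω.1 hω.2
    have h2 : max |A| |B| ≤ |A| + |B| :=
      max_le (le_add_of_nonneg_right (abs_nonneg B)) (le_add_of_nonneg_left (abs_nonneg A))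
    linarith
  -- first-passage events
  set E : ℕ → Set Ω :=
    fun n => {ω | lam ≤ T n ω} ∩ ⋂ (m : ℕ) (_ : m ∈ Finset.Ico 1 n), {ω | T m ω < lam} with hE
  have hEmeas : ∀ n, MeasurableSet (E n) := by
    intro n
    refine (measurableSet_le measurable_const (hTmeas n)).inter ?_
    exact MeasurableSet.biInter (Set.to_countable _)
      (fun m _ => measurableSet_lt (hTmeas m) measurable_const)
  have hEmem : ∀ n ω, ω ∈ E n ↔ (lam ≤ T n ω ∧ ∀ m, 1 ≤ m → m < n → T m ω < lam) := by
    intro n ω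
    simp only [hE, Set.mem_inter_iff, Set.mem_setOf_eq, Set.mem_iInter, Finset.mem_Ico]
    constructor
    · rintro ⟨h1, h2⟩; exact ⟨h1, fun m hm1 hm2 => h2 m ⟨hm1, hm2⟩⟩
    · rintro ⟨h1, h2⟩; exact ⟨h1, fun m hm => h2 m hm.1 hm.2⟩
  have haux : ∀ m n : ℕ, 1 ≤ m → m < n → Disjoint (E m) (E n) := by
    intro m n hm1 hlt
    rw [Set.disjoint_left]
    intro ω hωm hωn
    have h1 := (hEmem m ω).1 hωm
    have h2 := (hEmem n ω).1 hωn
    exact absurd h1.1 (not_le.2 (h2.2 m hm1 hlt))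
  have hdisj : Set.PairwiseDisjoint (↑(Finset.Icc 1 N) : Set ℕ) E := by
    intro m hm n hn hmn
    simp only [Finset.coe_Icc, Set.mem_Icc] at hm hn
    rw [Function.onFun]
    rcases lt_or_gt_of_ne hmn with hlt|hgt
    · exact haux m n hm.1 hlt
    · exact (haux n m hn.1 hgt).symm
  have hcover : {ω | ∃ n ∈ Finset.Icc 1 N, lam ≤ T n ω} = ⋃ n ∈ Finset.Icc 1 N, E n := by
    ext ω
    simp only [Set.mem_setOf_eq, Set.mem_iUnion]
    constructor
    · rintro ⟨n, hn, hln⟩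
      simp only [Finset.mem_Icc] at hn
      have hex : ∃ k, (1 ≤ k ∧ k ≤ N) ∧ lam ≤ T k ω := ⟨n, ⟨hn.1, hn.2⟩, hln⟩
      have hspec := Nat.find_spec hex
      obtain ⟨⟨hk1, hk2⟩, hk3⟩ := hspec
      refine ⟨Nat.find hex, Finset.mem_Icc.2 ⟨hk1, hk2⟩, ?_⟩
      rw [hEmem]
      refine ⟨hk3, fun m hm1 hm2 => ?_⟩
      by_contra hcon
      push_neg at hcon
      exact absurd ⟨⟨hm1, by omega⟩, hcon⟩ (Nat.find_min hex hm2)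
    · rintro ⟨n, hn, hωn⟩
      exact ⟨n, hn, ((hEmem n ω).1 hωn).1⟩
  -- per-event bound
  have hkey : ∀ n ∈ Finset.Icc 1 N,
      (P (E n)).toReal ≤ exp (-(s*lam)) * ∫ ω in E n, exp (s * T N ω) ∂P := by
    intro n hn
    have hnN : n ≤ N := (Finset.mem_Icc.1 hn).2
    -- step 1
    have step1 : exp (s*lam) * (P (E n)).toReal ≤ ∫ ω in E n, exp (s * T n ω) ∂P := by
      have hmono : ∀ ω ∈ E n, exp (s*lam) ≤ exp (s * T n ω) := fun ω hω =>
        exp_le_exp.2 (mul_le_mul_of_nonneg_left ((hEmem n ω).1 hω).1 hs.le)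
      have := setIntegral_mono_on (integrableOn_const (measure_ne_top P _))
        ((hTint n).integrableOn) (hEmeas n) hmono
      calc exp (s*lam) * (P (E n)).toReal = ∫ _ω in E n, exp (s*lam) ∂P := by
            rw [setIntegral_const, smul_eq_mul, measureReal_def]; ring
        _ ≤ _ := this
    -- independence setup
    set R : Ω → ℝ := fun ω => ∑ i ∈ Finset.Ico n N, Y i ω with hR
    set g : Ω → ℝ := fun ω => Set.indicator (E n) (fun _ => (1:ℝ)) ω * exp (s * T n ω) with hg
    set h : Ω → ℝ := fun ω => exp (s * R ω) with hh
    set sumAll : ({i // i ∈ Finset.range n} → ℝ) → ℝ := fun v => ∑ i ∈ Finset.univ, v i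
      with hsumAll
    set sumLT : ℕ → ({i // i ∈ Finset.range n} → ℝ) → ℝ :=
      fun m v => ∑ i : {i // i ∈ Finset.range n}, (if (i : ℕ) < m then v i else 0) with hsumLT
    have hsumAllm : Measurable sumAll := Finset.measurable_sum _ fun i _ => measurable_pi_apply i
    have hsumLTm : ∀ m, Measurable (sumLT m) := by
      intro m
      apply Finset.measurable_sum
      intro i _
      by_cases hc : (i : ℕ) < m
      · simp only [hc, if_true]; exact measurable_pi_apply i
      · simp only [hc, if_false]; exact measurable_const
    set SF : Set ({i // i ∈ Finset.range n} → ℝ) :=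
      {v | lam ≤ sumAll v ∧ ∀ m, 1 ≤ m → m < n → sumLT m v < lam} with hSF
    have hSFmeas : MeasurableSet SF := by
      have hSFeq : SF = {v | lam ≤ sumAll v} ∩
          ⋂ (m : ℕ) (_ : m ∈ Finset.Ico 1 n), {v | sumLT m v < lam} := by
        ext v
        simp only [hSF, Set.mem_setOf_eq, Set.mem_inter_iff, Set.mem_iInter, Finset.mem_Ico]
        constructor
        · rintro ⟨h1, h2⟩; exact ⟨h1, fun m hm => h2 m hm.1 hm.2⟩
        · rintro ⟨h1, h2⟩; exact ⟨h1, fun m hm1 hm2 => h2 m ⟨hm1, hm2⟩⟩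
      rw [hSFeq]
      refine (measurableSet_le measurable_const hsumAllm).inter ?_
      exact MeasurableSet.biInter (Set.to_countable _)
        (fun m _ => measurableSet_lt (hsumLTm m) measurable_const)
    set F : ({i // i ∈ Finset.range n} → ℝ) → ℝ :=
      fun v => Set.indicator SF (fun _ => (1:ℝ)) v * exp (s * sumAll v) with hF
    have hFmeas : Measurable F :=
      (Measurable.indicator measurable_const hSFmeas).mul ((hsumAllm.const_mul s).exp)
    set G : ({i // i ∈ Finset.Ico n N} → ℝ) → ℝ :=
      fun v => exp (s * ∑ i ∈ Finset.univ, v i) with hG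
    have hGmeas : Measurable G :=
      ((Finset.measurable_sum _ fun i _ => measurable_pi_apply i).const_mul s).exp
    have hsum1 : ∀ ω, sumAll (fun i => Y i ω) = T n ω := by
      intro ω
      rw [hsumAll]
      exact Finset.sum_coe_sort (Finset.range n) (fun i => Y i ω)
    have hsum2 : ∀ m, m ≤ n → ∀ ω, sumLT m (fun i => Y i ω) = T m ω := by
      intro m hm ω
      simp only [hsumLT]
      have h1 : ∑ i : {i // i ∈ Finset.range n}, (if (i:ℕ) < m then Y i ω else 0) =
          ∑ i ∈ Finset.range n, (if i < m then Y i ω else 0) :=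
        Finset.sum_coe_sort (Finset.range n) (fun i => if i < m then Y i ω else 0)
      rw [h1, ← Finset.sum_filter]
      have h2 : (Finset.range n).filter (fun i => i < m) = Finset.range m := by
        ext i
        simp only [Finset.mem_filter, Finset.mem_range]
        omega
      rw [h2]
    have hgF : g = fun ω => F (fun i => Y i ω) := by
      funext ω
      have h1 := hsum1 ω
      have hmem : ((fun i : {i // i ∈ Finset.range n} => Y i ω) ∈ SF) = (ω ∈ E n) := by
        simp only [hSF, Set.mem_setOf_eq, hEmem n ω, eq_iff_iff]
        constructor
        · rintro ⟨ha, hb2⟩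
          refine ⟨h1 ▸ ha, fun m hm1 hm2 => ?_⟩
          have hx := hb2 m hm1 hm2
          rwa [hsum2 m (le_of_lt hm2) ω] at hx
        · rintro ⟨ha, hb2⟩
          refine ⟨h1.symm ▸ ha, fun m hm1 hm2 => ?_⟩
          rw [hsum2 m (le_of_lt hm2) ω]
          exact hb2 m hm1 hm2
      simp only [hg, hF, Set.indicator_apply, hmem, h1]
    have hhG : h = fun ω => G (fun i => Y i ω) := by
      funext ω
      rw [hh, hG]
      simp only
      congr 1
      rw [hR]
      congr 1
      exact (Finset.sum_coe_sort (Finset.Ico n N) (fun i => Y i ω)).symm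
    have hgh : IndepFun g h P := by
      rw [hgF, hhG]
      exact indep_blocks Y hmeas hindep n N F G hFmeas hGmeas
    -- integrability
    have hgind : (fun ω => Set.indicator (E n) (fun _ => (1:ℝ)) ω * exp (s * T n ω)) =
        Set.indicator (E n) (fun ω => exp (s * T n ω)) := by
      funext ω
      by_cases hω : ω ∈ E n <;> simp [Set.indicator_apply, hω]
    have hgint : Integrable g P := by
      rw [hg, hgind]
      exact (hTint n).indicator (hEmeas n)
    have hRmeas : Measurable R := Finset.measurable_sum _ fun i _ => hmeas i
    have hRIcc : ∀ᵐ ω ∂P, R ω ∈ Set.Icc (((N - n : ℕ):ℝ)*A) (((N - n : ℕ):ℝ)*B) := by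
      filter_upwards [hall] with ω hω
      have hcard : (Finset.Ico n N).card = N - n := Nat.card_Ico n N
      have e1 : ∑ _i ∈ Finset.Ico n N, A = ((N-n:ℕ):ℝ)*A := by
        rw [Finset.sum_const, hcard]; simp [mul_comm]
      have e2 : ∑ _i ∈ Finset.Ico n N, B = ((N-n:ℕ):ℝ)*B := by
        rw [Finset.sum_const, hcard]; simp [mul_comm]
      exact ⟨e1 ▸ Finset.sum_le_sum fun i _ => (hω i).1,
        e2 ▸ Finset.sum_le_sum fun i _ => (hω i).2⟩
    have hhint : Integrable h P := integrable_exp_of_mem_Icc hRmeas hRIcc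
    -- Jensen : 1 ≤ ∫ h
    have hRint : Integrable R P := integrable_finset_sum _ (fun i _ => hYint i)
    have hRmean : ∫ ω, R ω ∂P = 0 := by
      rw [hR, integral_finset_sum _ (fun i _ => hYint i)]
      simp [hmean]
    have hJensen : (1:ℝ) ≤ ∫ ω, h ω ∂P := by
      have hmono2 : ∫ ω, (1 + s * R ω) ∂P ≤ ∫ ω, h ω ∂P := by
        refine integral_mono ((integrable_const 1).add (hRint.const_mul s)) hhint ?_
        intro ω
        have := add_one_le_exp (s * R ω)
        simp only [hh, Pi.add_apply]
        linarith
      have hval : ∫ ω, (1 + s * R ω) ∂P = 1 := by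
        rw [integral_add (integrable_const 1) (hRint.const_mul s), integral_const,
          integral_const_mul, hRmean]
        simp
      linarith
    have hgnn : 0 ≤ ∫ ω, g ω ∂P := by
      refine integral_nonneg fun ω => ?_
      exact mul_nonneg (Set.indicator_nonneg (by intro _ _; norm_num) ω) (exp_pos _).le
    -- step 2
    have hgh_eq : (fun ω => g ω * h ω) =
        fun ω => Set.indicator (E n) (fun _ => (1:ℝ)) ω * exp (s * T N ω) := by
      funext ω
      rw [hg, hh]
      simp only
      rw [mul_assoc, ← exp_add, ← mul_add]
      have hTR : T n ω + R ω = T N ω := Finset.sum_range_add_sum_Ico _ hnN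
      rw [hTR]
    have step2 : ∫ ω in E n, exp (s * T n ω) ∂P ≤ ∫ ω in E n, exp (s * T N ω) ∂P := by
      have hmul := IndepFun.integral_fun_mul_eq_mul_integral hgh hgint.aestronglyMeasurable hhint.aestronglyMeasurable
      have e1 : ∫ ω in E n, exp (s * T n ω) ∂P = ∫ ω, g ω ∂P := by
        rw [hg, hgind, integral_indicator (hEmeas n)]
      have e2 : ∫ ω in E n, exp (s * T N ω) ∂P = ∫ ω, g ω * h ω ∂P := by
        have hgind2 : (fun ω => Set.indicator (E n) (fun _ => (1:ℝ)) ω * exp (s * T N ω)) =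
            Set.indicator (E n) (fun ω => exp (s * T N ω)) := by
          funext ω
          by_cases hω : ω ∈ E n <;> simp [Set.indicator_apply, hω]
        rw [hgh_eq, hgind2, integral_indicator (hEmeas n)]
      rw [e1, e2]
      have : ∫ ω, g ω * h ω ∂P = (∫ ω, g ω ∂P) * ∫ ω, h ω ∂P := hmul
      rw [this]
      exact le_mul_of_one_le_right hgnn hJensen
    have hcomb := step1.trans step2
    calc (P (E n)).toReal = exp (-(s*lam)) * (exp (s*lam) * (P (E n)).toReal) := by
          rw [← mul_assoc, ← exp_add]; simp
      _ ≤ exp (-(s*lam)) * ∫ ω in E n, exp (s * T N ω) ∂P :=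
          mul_le_mul_of_nonneg_left hcomb (exp_pos _).le
  -- assemble
  show (P {ω | ∃ n ∈ Finset.Icc 1 N, lam ≤ T n ω}).toReal ≤ _
  rw [hcover, measure_biUnion_finset hdisj (fun n _ => hEmeas n),
    ENNReal.toReal_sum (fun n _ => measure_ne_top P _)]
  have hmgf : ∫ ω, exp (s * T N ω) ∂P ≤ exp ((N:ℝ) * (s^2*(B-A)^2/8)) := by
    have heq : (fun ω => exp (s * T N ω)) =
        fun ω => exp (s * (∑ i ∈ Finset.range N, Y i) ω) := by
      funext ω
      rw [Finset.sum_apply]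
    have hmgfeq : ∫ ω, exp (s * T N ω) ∂P = mgf (∑ i ∈ Finset.range N, Y i) P s := by
      rw [mgf]
      rw [heq]
    rw [hmgfeq, hindep.mgf_sum hmeas (Finset.range N)]
    have hbd : ∀ i ∈ Finset.range N, mgf (Y i) P s ≤ exp (s^2*(B-A)^2/8) := by
      intro i _
      exact hoeffding_mgf (hmeas i) s (hb i) (hmean i)
    calc ∏ i ∈ Finset.range N, mgf (Y i) P s ≤
        ∏ _i ∈ Finset.range N, exp (s^2*(B-A)^2/8) :=
          Finset.prod_le_prod (fun i _ => mgf_nonneg) hbd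
      _ = exp (s^2*(B-A)^2/8) ^ N := by rw [Finset.prod_const, Finset.card_range]
      _ = exp ((N:ℝ) * (s^2*(B-A)^2/8)) := by rw [← exp_nat_mul]
  calc ∑ n ∈ Finset.Icc 1 N, (P (E n)).toReal
      ≤ ∑ n ∈ Finset.Icc 1 N, exp (-(s*lam)) * ∫ ω in E n, exp (s * T N ω) ∂P :=
        Finset.sum_le_sum hkey
    _ = exp (-(s*lam)) * ∑ n ∈ Finset.Icc 1 N, ∫ ω in E n, exp (s * T N ω) ∂P := by
        rw [Finset.mul_sum]
    _ = exp (-(s*lam)) * ∫ ω in ⋃ n ∈ Finset.Icc 1 N, E n, exp (s * T N ω) ∂P := by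
        rw [integral_biUnion_finset _ (fun n _ => hEmeas n) hdisj
          (fun n _ => (hTint N).integrableOn)]
    _ ≤ exp (-(s*lam)) * ∫ ω, exp (s * T N ω) ∂P := by
        refine mul_le_mul_of_nonneg_left ?_ (exp_pos _).le
        exact setIntegral_le_integral (hTint N) (Filter.Eventually.of_forall fun ω => (exp_pos _).le)
    _ ≤ exp (-(s*lam)) * exp ((N:ℝ) * (s^2*(B-A)^2/8)) :=
        mul_le_mul_of_nonneg_left hmgf (exp_pos _).le
    _ = exp (-(s*lam) + N * (s^2*(B-A)^2/8)) := by rw [← exp_add]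
  done

end maximal

open MeasureTheory ProbabilityTheory
open scoped ENNReal

set_option maxHeartbeats 1000000

lemma block_exponent (c NR l LG tk : ℝ) (hc : 0 < c) (hNR : 0 < NR) (htk : 0 < tk)
    (hNle : NR ≤ 2 * tk) (hlsq : l^2 = 2*c^2*tk*LG) (hLG : 0 ≤ LG) :
    -(4*l/(NR*c^2) * l) + NR * ((4*l/(NR*c^2))^2 * c^2/8) ≤ -2*LG := by
  have heq : -(4*l/(NR*c^2) * l) + NR * ((4*l/(NR*c^2))^2 * c^2/8) = -2*l^2/(NR*c^2) := by
    field_simp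
    ring
  rw [heq, hlsq]
  rw [div_le_iff₀ (by positivity : (0:ℝ) < NR*c^2)]
  nlinarith [mul_nonneg hLG (mul_pos hNR (mul_pos hc hc)).le, sq_nonneg c]

/-- uniform concentration with adaptively shrinking confidence levels. -/
theorem stmt8 {Ω : Type*} [MeasurableSpace Ω] (P : Measure Ω) [IsProbabilityMeasure P]
    (L : ℕ) (hL : 1 ≤ L) (X : ℕ → Ω → ℝ) (hmeas : ∀ i, Measurable (X i))
    (hindep : iIndepFun X P)
    (hident : ∀ i, IdentDistrib (X i) (X 0) P P)
    (μ a b : ℝ) (hab : a ≤ b)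
    (hmean : ∀ i, ∫ ω, X i ω ∂P = μ)
    (hbound : ∀ i, ∀ᵐ ω ∂P, X i ω ∈ Set.Icc a b)
    (δ : ℝ) (hδ : 0 < δ) (hδ1 : δ ≤ 1) :
    ENNReal.ofReal (1 - L * δ) ≤
      P {ω | ∀ ℓ ∈ Finset.Icc 1 L,
        |(∑ i ∈ Finset.range ℓ, X i ω) / ℓ - μ| ≤
          Real.sqrt (2 * (b - a) ^ 2 * Real.log (8 / (δ * ℓ)) / ℓ)} := by
  classical
  by_cases hLδ : 1 ≤ (L:ℝ) * δ
  · have h0 : ENNReal.ofReal (1 - L * δ) = 0 := by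
      rw [ENNReal.ofReal_eq_zero]; linarith
    rw [h0]; exact bot_le
  push_neg at hLδ
  set G : Set Ω := {ω | ∀ ℓ ∈ Finset.Icc 1 L,
      |(∑ i ∈ Finset.range ℓ, X i ω) / ℓ - μ| ≤
        Real.sqrt (2 * (b - a) ^ 2 * Real.log (8 / (δ * ℓ)) / ℓ)} with hG
  -- reduce to a bound on the complement
  have hconc : P Gᶜ ≤ ENNReal.ofReal ((L:ℝ) * δ) → ENNReal.ofReal (1 - L * δ) ≤ P G := by
    intro hc
    have hsplit : (1:ℝ≥0∞) ≤ P G + P Gᶜ := by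
      have h1 := measure_union_le (μ := P) G Gᶜ
      rw [Set.union_compl_self, measure_univ] at h1
      exact h1
    have h2 : (1:ℝ≥0∞) - P Gᶜ ≤ P G := by
      rw [tsub_le_iff_right]
      exact hsplit
    calc ENNReal.ofReal (1 - L * δ) = ENNReal.ofReal 1 - ENNReal.ofReal ((L:ℝ)*δ) := by
          rw [← ENNReal.ofReal_sub]; positivity
      _ = 1 - ENNReal.ofReal ((L:ℝ)*δ) := by rw [ENNReal.ofReal_one]
      _ ≤ 1 - P Gᶜ := tsub_le_tsub_left hc 1
      _ ≤ P G := h2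
  apply hconc
  -- basic facts
  have hL0 : (0:ℝ) < L := by exact_mod_cast hL
  have hμab : a ≤ μ ∧ μ ≤ b := by
    have hXint : Integrable (X 0) P := by
      refine integrable_of_bounded_ae (hmeas 0) (C := |a| + |b|) ?_
      filter_upwards [hbound 0] with ω hω
      have h1 : |X 0 ω| ≤ max |a| |b| := abs_le_max_abs_abs hω.1 hω.2
      have h2 : max |a| |b| ≤ |a| + |b| :=
        max_le (le_add_of_nonneg_right (abs_nonneg b)) (le_add_of_nonneg_left (abs_nonneg a))
      linarith
    constructor
    · have h1 : ∫ _ω, a ∂P ≤ ∫ ω, X 0 ω ∂P :=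
        integral_mono_ae (integrable_const a) hXint ((hbound 0).mono fun ω h => h.1)
      simpa [hmean 0] using h1
    · have h1 : ∫ ω, X 0 ω ∂P ≤ ∫ _ω, b ∂P :=
        integral_mono_ae hXint (integrable_const b) ((hbound 0).mono fun ω h => h.2)
      simpa [hmean 0] using h1
  rcases eq_or_lt_of_le hab with haeq | hab'
  · -- degenerate case a = b
    subst haeq
    have hμ : μ = a := le_antisymm hμab.2 hμab.1
    have hae : ∀ᵐ ω ∂P, ∀ i, X i ω = a := by
      rw [MeasureTheory.ae_all_iff]
      intro i
      filter_upwards [hbound i] with ω hω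
      exact le_antisymm hω.2 hω.1
    have hsub : {ω | ∀ i, X i ω = a} ⊆ G := by
      intro ω hω
      rw [hG]
      intro ℓ hℓ
      have hℓ1 : 1 ≤ ℓ := (Finset.mem_Icc.1 hℓ).1
      have hℓ0 : ((ℓ:ℝ)) ≠ 0 := by positivity
      have hsum : ∑ i ∈ Finset.range ℓ, X i ω = ℓ * a := by
        rw [Finset.sum_congr rfl (fun i _ => hω i)]
        simp [mul_comm]
      have hv : ((ℓ:ℝ) * a)/(ℓ:ℝ) - a = 0 := by field_simp; ring
      rw [hsum, hμ, hv, abs_zero]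
      exact Real.sqrt_nonneg _
    have hnull : P Gᶜ = 0 := by
      have h0 : P {ω | ¬ ∀ i, X i ω = a} = 0 := MeasureTheory.ae_iff.1 hae
      refine measure_mono_null ?_ h0
      intro ω hω
      simp only [Set.mem_compl_iff] at hω
      exact fun hcon => hω (hsub hcon)
    rw [hnull]
    exact bot_le
  · -- main case a < b
    set c : ℝ := b - a with hc
    have hc0 : 0 < c := by rw [hc]; linarith
    set K : ℕ := Nat.log 2 L with hK
    have h2K : (2:ℕ)^K ≤ L := Nat.pow_log_le_self 2 (by omega)
    have h2KR : ((2:ℝ))^K ≤ (L:ℝ) := by exact_mod_cast h2K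
    -- centered variables
    set Yp : ℕ → Ω → ℝ := fun i ω => X i ω - μ with hYp
    set Ym : ℕ → Ω → ℝ := fun i ω => μ - X i ω with hYm
    have hYpmeas : ∀ i, Measurable (Yp i) := fun i => (hmeas i).sub measurable_const
    have hYmmeas : ∀ i, Measurable (Ym i) := fun i => measurable_const.sub (hmeas i)
    have hXint : ∀ i, Integrable (X i) P := by
      intro i
      refine integrable_of_bounded_ae (hmeas i) (C := |a| + |b|) ?_
      filter_upwards [hbound i] with ω hω
      have h1 : |X i ω| ≤ max |a| |b| := abs_le_max_abs_abs hω.1 hω.2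
      have h2 : max |a| |b| ≤ |a| + |b| :=
        max_le (le_add_of_nonneg_right (abs_nonneg b)) (le_add_of_nonneg_left (abs_nonneg a))
      linarith
    have hYpmean : ∀ i, ∫ ω, Yp i ω ∂P = 0 := by
      intro i
      rw [hYp]
      simp only
      rw [integral_sub (hXint i) (integrable_const μ), hmean i, integral_const]
      simp
    have hYmmean : ∀ i, ∫ ω, Ym i ω ∂P = 0 := by
      intro i
      rw [hYm]
      simp only
      rw [integral_sub (integrable_const μ) (hXint i), hmean i, integral_const]
      simp
    have hYpb : ∀ i, ∀ᵐ ω ∂P, Yp i ω ∈ Set.Icc (a - μ) (b - μ) := by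
      intro i
      filter_upwards [hbound i] with ω hω
      exact ⟨by simp [hYp]; linarith [hω.1], by simp [hYp]; linarith [hω.2]⟩
    have hYmb : ∀ i, ∀ᵐ ω ∂P, Ym i ω ∈ Set.Icc (μ - b) (μ - a) := by
      intro i
      filter_upwards [hbound i] with ω hω
      exact ⟨by simp [hYm]; linarith [hω.2], by simp [hYm]; linarith [hω.1]⟩
    have hYpindep : iIndepFun Yp P :=
      hindep.comp (fun _ x => x - μ) (fun _ => measurable_id.sub measurable_const)
    have hYmindep : iIndepFun Ym P :=
      hindep.comp (fun _ x => μ - x) (fun _ => measurable_const.sub measurable_id)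
    -- dyadic thresholds
    set lam : ℕ → ℝ := fun k => Real.sqrt (2*c^2*2^k*Real.log (4/(δ*2^k))) with hlam
    have hlog_pos : ∀ k ≤ K, 0 < Real.log (4/(δ*2^k)) := by
      intro k hk
      apply Real.log_pos
      have h1 : (2:ℝ)^k ≤ (2:ℝ)^K := by
        apply pow_le_pow_right₀ (by norm_num) hk
      have h2 : δ * 2^k ≤ δ * (L:ℝ) := by
        apply mul_le_mul_of_nonneg_left (h1.trans h2KR) hδ.le
      have h3 : δ * (L:ℝ) < 1 := by rw [mul_comm]; exact hLδ
      have h4 : 0 < δ * 2^k := by positivity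
      rw [lt_div_iff₀ h4]
      nlinarith
    have hlam_pos : ∀ k ≤ K, 0 < lam k := by
      intro k hk
      rw [hlam]
      apply Real.sqrt_pos.2
      have := hlog_pos k hk
      positivity
    -- bad events
    set Up : ℕ → Set Ω := fun k =>
      {ω | ∃ n ∈ Finset.Icc 1 (2^(k+1)-1), lam k ≤ ∑ i ∈ Finset.range n, Yp i ω} with hUp
    set Dn : ℕ → Set Ω := fun k =>
      {ω | ∃ n ∈ Finset.Icc 1 (2^(k+1)-1), lam k ≤ ∑ i ∈ Finset.range n, Ym i ω} with hDn
    -- covering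
    have hcover : Gᶜ ⊆ ⋃ k ∈ Finset.range (K+1), (Up k ∪ Dn k) := by
      intro ω hω
      rw [Set.mem_compl_iff, hG, Set.mem_setOf_eq] at hω
      push_neg at hω
      obtain ⟨ℓ, hℓmem, hℓ⟩ := hω
      obtain ⟨hℓ1, hℓL⟩ := Finset.mem_Icc.1 hℓmem
      set k : ℕ := Nat.log 2 ℓ with hk
      have hkK : k ≤ K := Nat.log_mono_right hℓL
      have h2kℓ : 2^k ≤ ℓ := Nat.pow_log_le_self 2 (by omega)
      have hℓ2k : ℓ < 2^(k+1) := Nat.lt_pow_succ_log_self (by norm_num) ℓ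
      have hℓR : (0:ℝ) < ℓ := by exact_mod_cast hℓ1
      -- threshold comparison : lam k ≤ ℓ * t_ℓ
      have hthresh : lam k ≤ (ℓ:ℝ) * Real.sqrt (2 * c^2 * Real.log (8 / (δ * ℓ)) / ℓ) := by
        have hδℓ : 0 < δ * (ℓ:ℝ) := by positivity
        have hδℓ1 : δ * (ℓ:ℝ) < 1 := by
          have : (ℓ:ℝ) ≤ (L:ℝ) := by exact_mod_cast hℓL
          nlinarith
        have hlog8 : Real.log (4/(δ*2^k)) ≤ Real.log (8/(δ*ℓ)) := by
          apply Real.log_le_log (by positivity)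
          rw [div_le_div_iff₀ (by positivity) hδℓ]
          have h2 : (ℓ:ℝ) ≤ 2^(k+1) := by
            have : (ℓ:ℝ) < ((2:ℝ))^(k+1) := by exact_mod_cast hℓ2k
            linarith
          have : (2:ℝ)^(k+1) = 2 * 2^k := by ring
          nlinarith
        have hlog4nn : 0 ≤ Real.log (4/(δ*2^k)) := (hlog_pos k hkK).le
        have hmul : 2*c^2*2^k*Real.log (4/(δ*2^k)) ≤ (ℓ:ℝ)^2 * (2*c^2*Real.log (8/(δ*ℓ))/ℓ) := by
          have heq : (ℓ:ℝ)^2 * (2*c^2*Real.log (8/(δ*ℓ))/ℓ) = 2*c^2*ℓ*Real.log (8/(δ*ℓ)) := by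
            field_simp
          rw [heq]
          have h2kℓR : ((2:ℝ))^k ≤ (ℓ:ℝ) := by exact_mod_cast h2kℓ
          have hcsq : (0:ℝ) < 2*c^2 := by positivity
          calc 2*c^2*2^k*Real.log (4/(δ*2^k)) ≤ 2*c^2*ℓ*Real.log (4/(δ*2^k)) := by
                apply mul_le_mul_of_nonneg_right _ hlog4nn
                nlinarith
            _ ≤ 2*c^2*ℓ*Real.log (8/(δ*ℓ)) := by
                apply mul_le_mul_of_nonneg_left hlog8
                positivity
        calc lam k = Real.sqrt (2*c^2*2^k*Real.log (4/(δ*2^k))) := rfl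
          _ ≤ Real.sqrt ((ℓ:ℝ)^2 * (2*c^2*Real.log (8/(δ*ℓ))/ℓ)) := Real.sqrt_le_sqrt hmul
          _ = (ℓ:ℝ) * Real.sqrt (2*c^2*Real.log (8/(δ*ℓ))/ℓ) := by
              rw [Real.sqrt_mul (sq_nonneg _), Real.sqrt_sq hℓR.le]
      -- from failure at ℓ to a large partial sum
      have habs : lam k < |∑ i ∈ Finset.range ℓ, X i ω - (ℓ:ℝ)*μ| := by
        have h2 : (ℓ:ℝ) * Real.sqrt (2*c^2*Real.log (8/(δ*ℓ))/ℓ) <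
            (ℓ:ℝ) * |(∑ i ∈ Finset.range ℓ, X i ω)/ℓ - μ| :=
          mul_lt_mul_of_pos_left hℓ hℓR
        have h3 : (ℓ:ℝ) * |(∑ i ∈ Finset.range ℓ, X i ω)/ℓ - μ| =
            |∑ i ∈ Finset.range ℓ, X i ω - (ℓ:ℝ)*μ| := by
          rw [← abs_of_pos hℓR, ← abs_mul]
          congr 1
          field_simp
          rw [abs_of_pos hℓR]
        rw [h3] at h2
        exact lt_of_le_of_lt hthresh h2
      have hsumYp : ∑ i ∈ Finset.range ℓ, Yp i ω =
          ∑ i ∈ Finset.range ℓ, X i ω - (ℓ:ℝ)*μ := by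
        rw [hYp]
        rw [Finset.sum_sub_distrib]
        congr 1
        rw [Finset.sum_const, Finset.card_range, nsmul_eq_mul]
      have hmemIcc : ℓ ∈ Finset.Icc 1 (2^(k+1)-1) := Finset.mem_Icc.2 ⟨hℓ1, by omega⟩
      rw [Set.mem_iUnion]
      refine ⟨k, ?_⟩
      rw [Set.mem_iUnion]
      refine ⟨Finset.mem_range.2 (by omega), ?_⟩
      rcases lt_abs.1 habs with hpos | hneg
      · left
        rw [hUp]
        exact ⟨ℓ, hmemIcc, by rw [hsumYp]; linarith⟩
      · right
        rw [hDn]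
        refine ⟨ℓ, hmemIcc, ?_⟩
        have hsumYm : ∑ i ∈ Finset.range ℓ, Ym i ω =
            -(∑ i ∈ Finset.range ℓ, X i ω - (ℓ:ℝ)*μ) := by
          rw [hYm]
          rw [Finset.sum_sub_distrib]
          rw [Finset.sum_const, Finset.card_range, nsmul_eq_mul]
          ring
        rw [hsumYm]
        linarith
    -- per-block bounds
    have hblock : ∀ k ≤ K, P (Up k) ≤ ENNReal.ofReal ((δ*2^k/4)^2) ∧
        P (Dn k) ≤ ENNReal.ofReal ((δ*2^k/4)^2) := by
      intro k hkK
      set N : ℕ := 2^(k+1) - 1 with hN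
      have hN1 : 1 ≤ N := by
        have : 2 ≤ 2^(k+1) := by
          calc 2 = 2^1 := by norm_num
          _ ≤ 2^(k+1) := Nat.pow_le_pow_right (by norm_num) (by omega)
        omega
      have hNR : (0:ℝ) < (N:ℝ) := by exact_mod_cast hN1
      have hN2k : ((2:ℝ))^k ≤ (N:ℝ) := by
        have : 2^k ≤ N := by
          have h1 : 2^(k+1) = 2 * 2^k := by ring
          have h2 : 1 ≤ 2^k := Nat.one_le_two_pow
          omega
        exact_mod_cast this
      have hNle : (N:ℝ) ≤ 2^(k+1) := by
        have : N ≤ 2^(k+1) := by omega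
        exact_mod_cast this
      set s : ℝ := 4 * lam k / ((N:ℝ) * c^2) with hs
      have hs0 : 0 < s := by
        rw [hs]
        have := hlam_pos k hkK
        positivity
      have hexp : -(s * lam k) + (N:ℝ) * (s^2 * c^2/8) ≤ Real.log (δ*2^k/4) * 2 := by
        have hlamsq : lam k ^ 2 = 2*c^2*2^k*Real.log (4/(δ*2^k)) := by
          rw [hlam]
          apply Real.sq_sqrt
          have := hlog_pos k hkK
          positivity
        have hkey := block_exponent c (N:ℝ) (lam k) (Real.log (4/(δ*2^k))) ((2:ℝ)^k)
          hc0 hNR (by positivity) (by rw [pow_succ] at hNle; linarith) hlamsq (hlog_pos k hkK).le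
        have hseq : s = 4 * lam k / ((N:ℝ) * c^2) := hs
        have hlog_inv : Real.log (4/(δ*2^k)) = - Real.log (δ*2^k/4) := by
          rw [← Real.log_inv]
          congr 1
          rw [inv_div]
        rw [hseq]
        calc -(4 * lam k / ((N:ℝ) * c^2) * lam k) +
            (N:ℝ) * ((4 * lam k / ((N:ℝ) * c^2))^2 * c^2/8) ≤
            -2*Real.log (4/(δ*2^k)) := hkey
          _ = Real.log (δ*2^k/4) * 2 := by rw [hlog_inv]; ring
      have hexp2 : Real.exp (-(s * lam k) + (N:ℝ) * (s^2 * c^2/8)) ≤ (δ*2^k/4)^2 := by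
        calc Real.exp (-(s * lam k) + (N:ℝ) * (s^2 * c^2/8)) ≤
            Real.exp (Real.log (δ*2^k/4) * 2) := Real.exp_le_exp.2 hexp
          _ = (δ*2^k/4)^2 := by
              rw [show Real.log (δ*2^k/4) * 2 = Real.log (δ*2^k/4) + Real.log (δ*2^k/4) by ring,
                Real.exp_add, Real.exp_log (by positivity)]
              ring
      constructor
      · have hm := maximal_hoeffding Yp hYpmeas hYpindep (A := a - μ) (B := b - μ)
          hYpmean hYpb N (lam k) s hs0
        have hBA : (b - μ) - (a - μ) = c := by rw [hc]; ring
        rw [hBA] at hm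
        have : P (Up k) ≤ ENNReal.ofReal (Real.exp (-(s * lam k) + (N:ℝ) * (s^2 * c^2/8))) := by
          rw [ENNReal.le_ofReal_iff_toReal_le (measure_ne_top P _) (Real.exp_pos _).le]
          exact hm
        exact this.trans (ENNReal.ofReal_le_ofReal hexp2)
      · have hm := maximal_hoeffding Ym hYmmeas hYmindep (A := μ - b) (B := μ - a)
          hYmmean hYmb N (lam k) s hs0
        have hBA : (μ - a) - (μ - b) = c := by rw [hc]; ring
        rw [hBA] at hm
        have : P (Dn k) ≤ ENNReal.ofReal (Real.exp (-(s * lam k) + (N:ℝ) * (s^2 * c^2/8))) := by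
          rw [ENNReal.le_ofReal_iff_toReal_le (measure_ne_top P _) (Real.exp_pos _).le]
          exact hm
        exact this.trans (ENNReal.ofReal_le_ofReal hexp2)
    -- sum up
    calc P Gᶜ ≤ P (⋃ k ∈ Finset.range (K+1), (Up k ∪ Dn k)) := measure_mono hcover
      _ ≤ ∑ k ∈ Finset.range (K+1), P (Up k ∪ Dn k) :=
          measure_biUnion_finset_le _ _
      _ ≤ ∑ k ∈ Finset.range (K+1), ENNReal.ofReal (2 * (δ*2^k/4)^2) := by
          apply Finset.sum_le_sum
          intro k hk
          have hkK : k ≤ K := by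
            have := Finset.mem_range.1 hk
            omega
          obtain ⟨h1, h2⟩ := hblock k hkK
          calc P (Up k ∪ Dn k) ≤ P (Up k) + P (Dn k) := measure_union_le _ _
            _ ≤ ENNReal.ofReal ((δ*2^k/4)^2) + ENNReal.ofReal ((δ*2^k/4)^2) := add_le_add h1 h2
            _ = ENNReal.ofReal (2 * (δ*2^k/4)^2) := by
                rw [← ENNReal.ofReal_add (by positivity) (by positivity)]
                congr 1
                ring
      _ = ENNReal.ofReal (∑ k ∈ Finset.range (K+1), 2 * (δ*2^k/4)^2) := by
          rw [ENNReal.ofReal_sum_of_nonneg]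
          intro k _
          positivity
      _ ≤ ENNReal.ofReal ((L:ℝ) * δ) := by
          apply ENNReal.ofReal_le_ofReal
          have hgeom : ∑ k ∈ Finset.range (K+1), 2 * (δ*(2:ℝ)^k/4)^2 =
              (δ^2/8) * ∑ k ∈ Finset.range (K+1), 4^k := by
            rw [Finset.mul_sum]
            apply Finset.sum_congr rfl
            intro k _
            have h4 : ((2:ℝ)^k)^2 = 4^k := by
              rw [← pow_mul, mul_comm, pow_mul]
              norm_num
            field_simp
            nlinarith [h4]
          rw [hgeom]
          have hsum4 : ∑ k ∈ Finset.range (K+1), (4:ℝ)^k = (4^(K+1) - 1)/3 := by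
            rw [geom_sum_eq (by norm_num)]
            norm_num
          rw [hsum4]
          have h4K : (4:ℝ)^(K+1) ≤ 4 * (L:ℝ)^2 := by
            have h1 : (4:ℝ)^K = ((2:ℝ)^K)^2 := by
              rw [← pow_mul, mul_comm, pow_mul]
              norm_num
            have h2 : ((2:ℝ)^K)^2 ≤ (L:ℝ)^2 := by
              apply pow_le_pow_left₀ (by positivity) h2KR
            calc (4:ℝ)^(K+1) = 4 * 4^K := by ring
              _ ≤ 4 * (L:ℝ)^2 := by rw [h1]; nlinarith
          have hδL : δ * (L:ℝ) < 1 := by rw [mul_comm]; exact hLδ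
          have hprod : (0:ℝ) < (L:ℝ)*δ := by positivity
          have hsq : ((L:ℝ)*δ)*((L:ℝ)*δ) ≤ (L:ℝ)*δ := by nlinarith
          have h5 : δ^2 * 4^(K+1) ≤ δ^2 * (4*(L:ℝ)^2) := mul_le_mul_of_nonneg_left h4K (sq_nonneg δ)
          have h6 : δ^2 * (4*(L:ℝ)^2) = 4*(((L:ℝ)*δ)*((L:ℝ)*δ)) := by ring
          nlinarith [h5, h6, hsq, hprod, sq_nonneg δ]
end

section
/- Fix T ≥ 1 and consider two MNL instances on items {1,2} with v_2 = 1, revenues r_1 = 1, r_2 = 1/2, and v_1 = 1 − 1/(4√T) under P_0 versus v_1 = 1 + 1/(4√T) under P_1. For any assortment S ⊆ {1,2}, the KL divergence between the purchase-outcome distributions P_0(S) and P_1(S) (categorical distributions on S ∪ {0} with probabilities v_j/(1+∑_{i∈S}v_i) for j ∈ S and 1/(1+∑_{i∈S}v_i) for j=0) satisfies KL(P_0(S)‖P_1(S)) ≤ 1/(18T). -/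
open Real

lemma artanh_lb {x : ℝ} (h0 : 0 ≤ x) (h1 : x < 1) :
    2 * x ≤ Real.log (1 + x) - Real.log (1 - x) := by
  have key : MonotoneOn (fun y : ℝ => Real.log (1 + y) - Real.log (1 - y) - 2 * y)
      (Set.Ico 0 1) := by
    apply monotoneOn_of_deriv_nonneg (convex_Ico 0 1)
    · apply ContinuousOn.sub
      apply ContinuousOn.sub
      · exact (Real.continuousOn_log.comp (by fun_prop)
          (fun y hy => by simp only [Set.mem_Ico] at hy; simp only [Set.mem_compl_iff, Set.mem_singleton_iff]; intro h; linarith [hy.1]))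
      · exact (Real.continuousOn_log.comp (by fun_prop)
          (fun y hy => by simp only [Set.mem_Ico] at hy; simp only [Set.mem_compl_iff, Set.mem_singleton_iff]; intro h; nlinarith [hy.2]))
      · fun_prop
    · intro y hy
      rw [interior_Ico] at hy
      obtain ⟨hy0, hy1⟩ := hy
      have h1p : (0:ℝ) < 1 + y := by linarith
      have h1m : (0:ℝ) < 1 - y := by linarith
      have hd : HasDerivAt (fun y : ℝ => Real.log (1 + y) - Real.log (1 - y) - 2 * y)
          (1/(1+y) - (-1)/(1-y) - 2) y := by
        have d1 : HasDerivAt (fun y : ℝ => Real.log (1 + y)) (1/(1+y)) y := by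
          have := ((hasDerivAt_id y).const_add 1).log (by intro h; simp only [id_eq] at h; linarith)
          simpa using this
        have d2 : HasDerivAt (fun y : ℝ => Real.log (1 - y)) ((-1)/(1-y)) y := by
          have := ((hasDerivAt_id y).const_sub 1).log (by intro h; simp only [id_eq] at h; nlinarith)
          simpa [div_eq_mul_inv] using this
        have d3 : HasDerivAt (fun y : ℝ => 2 * y) 2 y := by
          simpa using (hasDerivAt_id y).const_mul 2
        exact (d1.sub d2).sub d3
      exact hd.differentiableAt.differentiableWithinAt
    · intro y hy
      rw [interior_Ico] at hy
      obtain ⟨hy0, hy1⟩ := hy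
      have h1p : (0:ℝ) < 1 + y := by linarith
      have h1m : (0:ℝ) < 1 - y := by linarith
      have hd : HasDerivAt (fun y : ℝ => Real.log (1 + y) - Real.log (1 - y) - 2 * y)
          (1/(1+y) - (-1)/(1-y) - 2) y := by
        have d1 : HasDerivAt (fun y : ℝ => Real.log (1 + y)) (1/(1+y)) y := by
          have := ((hasDerivAt_id y).const_add 1).log (by intro h; simp only [id_eq] at h; linarith)
          simpa using this
        have d2 : HasDerivAt (fun y : ℝ => Real.log (1 - y)) ((-1)/(1-y)) y := by
          have := ((hasDerivAt_id y).const_sub 1).log (by intro h; simp only [id_eq] at h; nlinarith)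
          simpa [div_eq_mul_inv] using this
        have d3 : HasDerivAt (fun y : ℝ => 2 * y) 2 y := by
          simpa using (hasDerivAt_id y).const_mul 2
        exact (d1.sub d2).sub d3
      rw [hd.deriv]
      have : 1/(1+y) - (-1)/(1-y) - 2 = 2*y^2 / ((1+y)*(1-y)) := by
        field_simp; ring
      rw [this]
      positivity
  have h0mem : (0:ℝ) ∈ Set.Ico (0:ℝ) 1 := by constructor <;> norm_num
  have hxmem : x ∈ Set.Ico (0:ℝ) 1 := ⟨h0, h1⟩
  have := key h0mem hxmem h0
  simp only [add_zero, sub_zero, mul_zero, Real.log_one] at this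
  linarith

lemma artanh_ub {x : ℝ} (h0 : 0 ≤ x) (h1 : x < 1) :
    Real.log (1 + x) - Real.log (1 - x) ≤ 2 * x / (1 - x^2) := by
  have key : MonotoneOn (fun y : ℝ => 2 * y / (1 - y^2) - (Real.log (1 + y) - Real.log (1 - y)))
      (Set.Ico 0 1) := by
    apply monotoneOn_of_deriv_nonneg (convex_Ico 0 1)
    · apply ContinuousOn.sub
      · apply ContinuousOn.div (by fun_prop) (by fun_prop)
        intro y hy
        simp only [Set.mem_Ico] at hy
        nlinarith [hy.1, hy.2]
      · apply ContinuousOn.sub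
        · exact (Real.continuousOn_log.comp (by fun_prop)
            (fun y hy => by simp only [Set.mem_Ico] at hy; simp only [Set.mem_compl_iff, Set.mem_singleton_iff]; intro h; linarith [hy.1]))
        · exact (Real.continuousOn_log.comp (by fun_prop)
            (fun y hy => by simp only [Set.mem_Ico] at hy; simp only [Set.mem_compl_iff, Set.mem_singleton_iff]; intro h; nlinarith [hy.2]))
    all_goals {
      intro y hy
      rw [interior_Ico] at hy
      obtain ⟨hy0, hy1⟩ := hy
      have h1p : (0:ℝ) < 1 + y := by linarith
      have h1m : (0:ℝ) < 1 - y := by linarith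
      have hden : (0:ℝ) < 1 - y^2 := by nlinarith
      have hd : HasDerivAt (fun y : ℝ => 2 * y / (1 - y^2) - (Real.log (1 + y) - Real.log (1 - y)))
          ((2 * (1 - y^2) - 2*y*(-(2*y)))/(1-y^2)^2 - (1/(1+y) - (-1)/(1-y))) y := by
        have d0 : HasDerivAt (fun y : ℝ => 2 * y / (1 - y^2))
            ((2 * (1 - y^2) - 2*y*(-(2*y)))/(1-y^2)^2) y := by
          have dn : HasDerivAt (fun y : ℝ => 2 * y) 2 y := by
            simpa using (hasDerivAt_id y).const_mul 2
          have dd : HasDerivAt (fun y : ℝ => 1 - y^2) (-(2*y)) y := by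
            have := (hasDerivAt_pow 2 y).const_sub 1
            simpa using this
          exact dn.div dd (by positivity)
        have d1 : HasDerivAt (fun y : ℝ => Real.log (1 + y)) (1/(1+y)) y := by
          have := ((hasDerivAt_id y).const_add 1).log (by intro h; simp only [id_eq] at h; linarith)
          simpa using this
        have d2 : HasDerivAt (fun y : ℝ => Real.log (1 - y)) ((-1)/(1-y)) y := by
          have := ((hasDerivAt_id y).const_sub 1).log (by intro h; simp only [id_eq] at h; nlinarith)
          simpa [div_eq_mul_inv] using this
        exact d0.sub (d1.sub d2)
      first
      | exact hd.differentiableAt.differentiableWithinAt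
      | (rw [hd.deriv]
         have heq : (2 * (1 - y^2) - 2*y*(-(2*y)))/(1-y^2)^2 - (1/(1+y) - (-1)/(1-y))
             = 4*y^2/(1-y^2)^2 := by
           rw [show (1:ℝ)-y^2 = (1+y)*(1-y) by ring]
           field_simp
           ring
         rw [heq]; positivity)
    }
  have h0mem : (0:ℝ) ∈ Set.Ico (0:ℝ) 1 := by constructor <;> norm_num
  have hxmem : x ∈ Set.Ico (0:ℝ) 1 := ⟨h0, h1⟩
  have := key h0mem hxmem h0
  simp only [add_zero, sub_zero, mul_zero, Real.log_one] at this
  linarith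



/-- Utility parameters of the two items: item 0 has utility 1 + ε, item 1 has utility 1.
(Revenues are r_0 = 1 and r_1 = 1/2; they do not enter the choice probabilities.) -/
noncomputable def lbV (ε : ℝ) : Fin 2 → ℝ := ![1 + ε, 1]

/-- Normalizing denominator 1 + ∑_{i∈S} v_i. -/
noncomputable def lbD (ε : ℝ) (S : Finset (Fin 2)) : ℝ := 1 + ∑ i ∈ S, lbV ε i

/-- KL divergence between the purchase-outcome distributions (on S ∪ {no-purchase})
of the MNL instances with perturbations ε₀ and ε₁ of item 0's utility. -/
noncomputable def lbKL (ε₀ ε₁ : ℝ) (S : Finset (Fin 2)) : ℝ :=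
  (1 / lbD ε₀ S) * Real.log ((1 / lbD ε₀ S) / (1 / lbD ε₁ S)) +
    ∑ j ∈ S, (lbV ε₀ j / lbD ε₀ S) *
      Real.log ((lbV ε₀ j / lbD ε₀ S) / (lbV ε₁ j / lbD ε₁ S))

set_option maxHeartbeats 1000000 in
/-- KL(P₀(S) ‖ P₁(S)) ≤ 1/(18T) for every assortment S ⊆ {1,2}. -/
theorem stmt11 (T : ℕ) (hT : 1 ≤ T) (S : Finset (Fin 2)) :
    lbKL (-(1 / (4 * Real.sqrt T))) (1 / (4 * Real.sqrt T)) S ≤ 1 / (18 * T) := by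
  have hT0 : (0:ℝ) < T := by exact_mod_cast Nat.lt_of_lt_of_le Nat.zero_lt_one hT
  have hs1 : 1 ≤ Real.sqrt T := Real.one_le_sqrt.mpr (by exact_mod_cast hT)
  set ε : ℝ := 1 / (4 * Real.sqrt T) with hε
  have hε0 : 0 < ε := by rw [hε]; positivity
  have hε4 : ε ≤ 1/4 := by
    rw [hε]
    have := one_div_le_one_div_of_le (show (0:ℝ) < 4 by norm_num) (by linarith : (4:ℝ) ≤ 4 * Real.sqrt T)
    linarith
  have hss : Real.sqrt T ^ 2 = (T:ℝ) := Real.sq_sqrt hT0.le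
  have hεsq : ε^2 = 1/(16*(T:ℝ)) := by
    rw [hε, div_pow, one_pow, mul_pow, hss]; norm_num
  have hrhs : 1/(18*(T:ℝ)) = (8/9) * ε^2 := by
    rw [hεsq]; field_simp; ring
  have h1m : (0:ℝ) < 1 - ε := by linarith
  have h1p : (0:ℝ) < 1 + ε := by linarith
  have h2m : (0:ℝ) < 2 - ε := by linarith
  have h2p : (0:ℝ) < 2 + ε := by linarith
  have h3m : (0:ℝ) < 3 - ε := by linarith
  have h3p : (0:ℝ) < 3 + ε := by linarith
  have ha : 2*ε ≤ Real.log (1+ε) - Real.log (1-ε) := artanh_lb hε0.le (by linarith)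
  by_cases h0 : (0 : Fin 2) ∈ S <;> by_cases h1 : (1 : Fin 2) ∈ S
  · -- S = {0, 1}
    have hS : S = {0, 1} := by ext x; fin_cases x <;> simp [h0, h1]
    subst hS
    have hKL : lbKL (-ε) ε {0, 1} =
        (Real.log (3+ε) - Real.log (3-ε))
          - ((1-ε)/(3-ε)) * (Real.log (1+ε) - Real.log (1-ε)) := by
      simp only [lbKL, lbD, lbV, Finset.sum_insert (by decide : (0:Fin 2) ∉ ({1}:Finset (Fin 2))),
        Finset.sum_singleton, Matrix.cons_val_zero, Matrix.cons_val_one, Matrix.head_cons]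
      have e1 : (1:ℝ) + (1 + -ε + 1) = 3 - ε := by ring
      have e2 : (1:ℝ) + (1 + ε + 1) = 3 + ε := by ring
      rw [e1, e2]
      have l1 : Real.log ((1/(3-ε))/(1/(3+ε))) = Real.log (3+ε) - Real.log (3-ε) := by
        rw [show (1/(3-ε))/(1/(3+ε)) = (3+ε)/(3-ε) by field_simp,
          Real.log_div h3p.ne' h3m.ne']
      have l2 : Real.log (((1 + -ε)/(3-ε))/((1+ε)/(3+ε)))
          = (Real.log (1-ε) + Real.log (3+ε)) - (Real.log (1+ε) + Real.log (3-ε)) := by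
        rw [show ((1 + -ε)/(3-ε))/((1+ε)/(3+ε)) = ((1-ε)*(3+ε))/((1+ε)*(3-ε)) by
            field_simp; ring,
          Real.log_div (by positivity) (by positivity),
          Real.log_mul h1m.ne' h3p.ne', Real.log_mul h1p.ne' h3m.ne']
      have l3 : Real.log ((1/(3-ε))/(1/(3+ε))) = Real.log (3+ε) - Real.log (3-ε) := l1
      rw [l1, l2]
      field_simp
      ring
    have hc : Real.log (3+ε) - Real.log (3-ε) ≤ 2*(ε/3)/(1-(ε/3)^2) := by
      have h := artanh_ub (x := ε/3) (by positivity) (by linarith)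
      have e1 : (3:ℝ)+ε = 3*(1+ε/3) := by ring
      have e2 : (3:ℝ)-ε = 3*(1-ε/3) := by ring
      rw [e1, e2, Real.log_mul (by norm_num) (ne_of_gt (by linarith)),
        Real.log_mul (by norm_num) (ne_of_gt (by linarith))]
      linarith
    have hden : (0:ℝ) < 9 - ε^2 := by nlinarith
    have step1 : 2*(ε/3)/(1-(ε/3)^2) = 6*ε/(9-ε^2) := by
      rw [div_eq_div_iff (ne_of_gt (by nlinarith)) hden.ne']; ring
    have step2 : 6*ε/(9-ε^2) - ((1-ε)/(3-ε))*(2*ε) = 2*ε^2*(2+ε)/(9-ε^2) := by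
      rw [show (9:ℝ)-ε^2 = (3-ε)*(3+ε) by ring]
      field_simp
      ring
    have hcube : ε^3 ≤ (1/4)*ε^2 := by nlinarith [sq_nonneg ε]
    have hquart : ε^4 ≤ (1/16)*ε^2 := by nlinarith [sq_nonneg ε, sq_nonneg (ε^2)]
    have step3 : 2*ε^2*(2+ε)/(9-ε^2) ≤ 8/9*ε^2 := by
      rw [div_le_iff₀ hden]; nlinarith [sq_nonneg ε]
    have hcoef : 0 ≤ (1-ε)/(3-ε) := div_nonneg (by linarith) (by linarith)
    have hmul : ((1-ε)/(3-ε))*(2*ε) ≤ ((1-ε)/(3-ε)) * (Real.log (1+ε) - Real.log (1-ε)) :=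
      mul_le_mul_of_nonneg_left ha hcoef
    rw [hKL, hrhs]
    rw [step1] at hc
    linarith
  · -- S = {0}
    have hS : S = {0} := by ext x; fin_cases x <;> simp [h0, h1]
    subst hS
    have hKL : lbKL (-ε) ε {0} =
        (Real.log (2+ε) - Real.log (2-ε))
          - ((1-ε)/(2-ε)) * (Real.log (1+ε) - Real.log (1-ε)) := by
      simp only [lbKL, lbD, lbV, Finset.sum_singleton, Matrix.cons_val_zero]
      have e1 : (1:ℝ) + (1 + -ε) = 2 - ε := by ring
      have e2 : (1:ℝ) + (1 + ε) = 2 + ε := by ring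
      rw [e1, e2]
      have l1 : Real.log ((1/(2-ε))/(1/(2+ε))) = Real.log (2+ε) - Real.log (2-ε) := by
        rw [show (1/(2-ε))/(1/(2+ε)) = (2+ε)/(2-ε) by field_simp,
          Real.log_div h2p.ne' h2m.ne']
      have l2 : Real.log (((1 + -ε)/(2-ε))/((1+ε)/(2+ε)))
          = (Real.log (1-ε) + Real.log (2+ε)) - (Real.log (1+ε) + Real.log (2-ε)) := by
        rw [show ((1 + -ε)/(2-ε))/((1+ε)/(2+ε)) = ((1-ε)*(2+ε))/((1+ε)*(2-ε)) by
            field_simp; ring,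
          Real.log_div (by positivity) (by positivity),
          Real.log_mul h1m.ne' h2p.ne', Real.log_mul h1p.ne' h2m.ne']
      rw [l1, l2]
      field_simp
      ring
    have hc : Real.log (2+ε) - Real.log (2-ε) ≤ 2*(ε/2)/(1-(ε/2)^2) := by
      have h := artanh_ub (x := ε/2) (by positivity) (by linarith)
      have e1 : (2:ℝ)+ε = 2*(1+ε/2) := by ring
      have e2 : (2:ℝ)-ε = 2*(1-ε/2) := by ring
      rw [e1, e2, Real.log_mul (by norm_num) (ne_of_gt (by linarith)),
        Real.log_mul (by norm_num) (ne_of_gt (by linarith))]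
      linarith
    have hden : (0:ℝ) < 4 - ε^2 := by nlinarith
    have step1 : 2*(ε/2)/(1-(ε/2)^2) = 4*ε/(4-ε^2) := by
      rw [div_eq_div_iff (ne_of_gt (by nlinarith)) hden.ne']; ring
    have step2 : 4*ε/(4-ε^2) - ((1-ε)/(2-ε))*(2*ε) = 2*ε^2*(1+ε)/(4-ε^2) := by
      rw [show (4:ℝ)-ε^2 = (2-ε)*(2+ε) by ring]
      field_simp
      ring
    have hcube : ε^3 ≤ (1/4)*ε^2 := by nlinarith [sq_nonneg ε]
    have hquart : ε^4 ≤ (1/16)*ε^2 := by nlinarith [sq_nonneg ε, sq_nonneg (ε^2)]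
    have step3 : 2*ε^2*(1+ε)/(4-ε^2) ≤ 8/9*ε^2 := by
      rw [div_le_iff₀ hden]; nlinarith [sq_nonneg ε]
    have hcoef : 0 ≤ (1-ε)/(2-ε) := div_nonneg (by linarith) (by linarith)
    have hmul : ((1-ε)/(2-ε))*(2*ε) ≤ ((1-ε)/(2-ε)) * (Real.log (1+ε) - Real.log (1-ε)) :=
      mul_le_mul_of_nonneg_left ha hcoef
    rw [hKL, hrhs]
    rw [step1] at hc
    linarith
  · -- S = {1}
    have hS : S = {1} := by ext x; fin_cases x <;> simp [h0, h1]
    subst hS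
    have hKL : lbKL (-ε) ε {1} = 0 := by
      simp only [lbKL, lbD, lbV, Finset.sum_singleton, Matrix.cons_val_one, Matrix.head_cons]
      norm_num
    rw [hKL]
    positivity
  · -- S = ∅
    have hS : S = ∅ := by ext x; fin_cases x <;> simp [h0, h1]
    subst hS
    have hKL : lbKL (-ε) ε ∅ = 0 := by
      simp [lbKL, lbD]
    rw [hKL]
    positivity
end
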